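/- arXiv:2512.00385 — 3 statements merged into one kernel-verified Lean document; each statement's English description precedes it below -/
import Mathlib

section
/- Let 𝒫 be a partition of C into nonempty blocks and let P, Q be two distinct blocks of 𝒫. Let 𝒫' be the partition obtained from 𝒫 by replacing the two blocks P and Q with the single block P ∪ Q. Then Ω(𝒫) − Ω(𝒫') = Δ(P,Q), i.e., merging the two blocks changes the energy by exactly the merge gain Δ(P,Q) = −(|P|·|Q|/(|P|+|Q|))·‖F_P − F_Q‖² + λ · Σ_{{p,q}∈ℰ, p∈P, q∈Q} w_{p,q}. -/
open Finset

variable {C E : Type*}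

noncomputable def mean [NormedAddCommGroup E] [InnerProductSpace ℝ E]
    (f : C → E) (U : Finset C) : E :=
  (U.card : ℝ)⁻¹ • ∑ p ∈ U, f p

noncomputable def cost [NormedAddCommGroup E] [InnerProductSpace ℝ E]
    (f : C → E) (U : Finset C) : ℝ :=
  ∑ p ∈ U, ‖f p - mean f U‖ ^ 2

def IsPartition [Fintype C] (Prt : Finset (Finset C)) : Prop :=
  (∀ U ∈ Prt, U.Nonempty) ∧ (∀ U ∈ Prt, ∀ V ∈ Prt, U ≠ V → Disjoint U V) ∧
    ∀ p : C, ∃ U ∈ Prt, p ∈ U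

open scoped Classical in
/-- Sum of the weights of the edges of `ℰ` whose endpoints lie in different blocks of `Prt`. -/
noncomputable def crossSum (ℰ : Finset (Sym2 C)) (w : Sym2 C → ℝ)
    (Prt : Finset (Finset C)) : ℝ :=
  ∑ e ∈ ℰ.filter (fun e => ¬ ∃ U ∈ Prt, ∀ p ∈ e, p ∈ U), w e

noncomputable def energy [Fintype C] [NormedAddCommGroup E] [InnerProductSpace ℝ E]
    (f : C → E) (ℰ : Finset (Sym2 C)) (w : Sym2 C → ℝ) (lam : ℝ)
    (Prt : Finset (Finset C)) : ℝ :=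
  ∑ U ∈ Prt, cost f U + lam * crossSum ℰ w Prt

open scoped Classical in
/-- Sum of the weights of the edges of `ℰ` joining `P` and `Q`. -/
noncomputable def joinSum (ℰ : Finset (Sym2 C)) (w : Sym2 C → ℝ) (P Q : Finset C) : ℝ :=
  ∑ e ∈ ℰ.filter (fun e => ∃ p ∈ P, ∃ q ∈ Q, e = s(p, q)), w e

noncomputable def mergeGain [NormedAddCommGroup E] [InnerProductSpace ℝ E]
    (f : C → E) (ℰ : Finset (Sym2 C)) (w : Sym2 C → ℝ) (lam : ℝ)
    (P Q : Finset C) : ℝ :=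
  -(((P.card : ℝ) * (Q.card : ℝ)) / ((P.card : ℝ) + (Q.card : ℝ))) *
      ‖mean f P - mean f Q‖ ^ 2
    + lam * joinSum ℰ w P Q

/-! ### Auxiliary lemmas -/

lemma sum_eq_card_smul_mean [NormedAddCommGroup E] [InnerProductSpace ℝ E]
    (f : C → E) (U : Finset C) (hU : U.Nonempty) :
    ∑ p ∈ U, f p = (U.card : ℝ) • mean f U := by
  rw [mean, smul_smul, mul_inv_cancel₀ (by exact_mod_cast hU.card_pos.ne'), one_smul]

lemma cost_eq [NormedAddCommGroup E] [InnerProductSpace ℝ E]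
    (f : C → E) (U : Finset C) :
    cost f U = (∑ p ∈ U, ‖f p‖ ^ 2) - (U.card : ℝ) * ‖mean f U‖ ^ 2 := by
  rcases U.eq_empty_or_nonempty with rfl | hU
  · simp [cost]
  · have h1 : ∀ p ∈ U, ‖f p - mean f U‖ ^ 2
        = ‖f p‖ ^ 2 - 2 * inner ℝ (f p) (mean f U) + ‖mean f U‖ ^ 2 := by
      intro p _; exact norm_sub_sq_real _ _
    rw [cost, Finset.sum_congr rfl h1, Finset.sum_add_distrib, Finset.sum_sub_distrib,
      Finset.sum_const, ← Finset.mul_sum, ← sum_inner, sum_eq_card_smul_mean f U hU,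
      real_inner_smul_left, real_inner_self_eq_norm_sq]
    ring

lemma alg_core [NormedAddCommGroup E] [InnerProductSpace ℝ E] (a b : ℝ) (ha : 0 < a) (hb : 0 < b)
    (u v : E) :
    a * ‖u‖^2 + b * ‖v‖^2 - (a+b) * ‖(a+b)⁻¹ • (a • u + b • v)‖^2
      = (a*b/(a+b)) * ‖u - v‖^2 := by
  have hab : a + b ≠ 0 := by positivity
  have h1 : ‖(a+b)⁻¹ • (a • u + b • v)‖^2 = ((a+b)⁻¹)^2 * ‖a • u + b • v‖^2 := by
    rw [norm_smul]; simp [mul_pow]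
  have h2 : ‖a • u + b • v‖^2 = a^2*‖u‖^2 + 2*(a*b)*inner ℝ u v + b^2*‖v‖^2 := by
    rw [← real_inner_self_eq_norm_sq]
    simp only [inner_add_add_self, real_inner_smul_left, real_inner_smul_right,
      real_inner_self_eq_norm_sq, real_inner_comm u v, norm_smul, mul_pow, Real.norm_eq_abs, sq_abs]
    ring
  have h3 : ‖u - v‖^2 = ‖u‖^2 - 2*inner ℝ u v + ‖v‖^2 := norm_sub_sq_real u v
  rw [h1, h2, h3]
  field_simp
  ring

lemma cost_union [DecidableEq C] [NormedAddCommGroup E] [InnerProductSpace ℝ E]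
    (f : C → E) (P Q : Finset C) (hP : P.Nonempty) (hQ : Q.Nonempty) (hd : Disjoint P Q) :
    cost f (P ∪ Q) = cost f P + cost f Q
      + (((P.card : ℝ) * (Q.card : ℝ)) / ((P.card : ℝ) + (Q.card : ℝ)))
          * ‖mean f P - mean f Q‖ ^ 2 := by
  have hcard : ((P ∪ Q).card : ℝ) = (P.card : ℝ) + (Q.card : ℝ) := by
    rw [card_union_of_disjoint hd]; push_cast; ring
  have ha : (0:ℝ) < P.card := by exact_mod_cast hP.card_pos
  have hb : (0:ℝ) < Q.card := by exact_mod_cast hQ.card_pos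
  have hmean : mean f (P ∪ Q)
      = ((P.card : ℝ) + (Q.card : ℝ))⁻¹ • ((P.card : ℝ) • mean f P + (Q.card : ℝ) • mean f Q) := by
    rw [mean, Finset.sum_union hd, hcard, sum_eq_card_smul_mean f P hP,
      sum_eq_card_smul_mean f Q hQ]
  rw [cost_eq, cost_eq, cost_eq, Finset.sum_union hd, hcard, hmean]
  have := alg_core (P.card : ℝ) (Q.card : ℝ) ha hb (mean f P) (mean f Q)
  linarith

lemma cross_split [Fintype C] [DecidableEq C]
    (ℰ : Finset (Sym2 C)) (w : Sym2 C → ℝ)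
    (Prt : Finset (Finset C)) (hPrt : IsPartition Prt)
    (P Q : Finset C) (hP : P ∈ Prt) (hQ : Q ∈ Prt) (hPQ : P ≠ Q) :
    crossSum ℰ w Prt
      = crossSum ℰ w (insert (P ∪ Q) ((Prt.erase P).erase Q)) + joinSum ℰ w P Q := by
  classical
  obtain ⟨hne, hdisj, hcov⟩ := hPrt
  have uniq : ∀ {U V : Finset C} {z : C}, U ∈ Prt → V ∈ Prt → z ∈ U → z ∈ V → U = V := by
    intro U V z hU hV h1 h2
    by_contra h
    exact (Finset.disjoint_left.mp (hdisj _ hU _ hV h) h1) h2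
  set Prt' := insert (P ∪ Q) ((Prt.erase P).erase Q) with hPrt'
  rw [crossSum, crossSum, joinSum, Finset.sum_filter, Finset.sum_filter, Finset.sum_filter,
    ← Finset.sum_add_distrib]
  refine Finset.sum_congr rfl ?_
  intro e he
  induction e using Sym2.ind with
  | _ x y =>
    have hJiff : (∃ p ∈ P, ∃ q ∈ Q, s(x, y) = s(p, q))
        ↔ ((x ∈ P ∧ y ∈ Q) ∨ (y ∈ P ∧ x ∈ Q)) := by
      constructor
      · rintro ⟨p, hp, q, hq, heq⟩
        rw [Sym2.eq_iff] at heq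
        rcases heq with heq | heq <;> simp_all [Prod.ext_iff]
      · rintro (⟨h1, h2⟩ | ⟨h1, h2⟩)
        · exact ⟨x, h1, y, h2, rfl⟩
        · exact ⟨y, h1, x, h2, Sym2.eq_swap⟩
    have hmemiff : ∀ U : Finset C, (∀ p ∈ s(x, y), p ∈ U) ↔ (x ∈ U ∧ y ∈ U) := by
      intro U
      constructor
      · intro h; exact ⟨h x (by simp), h y (by simp)⟩
      · rintro ⟨h1, h2⟩ p hp
        rcases Sym2.mem_iff.mp hp with rfl | rfl <;> assumption
    by_cases hJ : (x ∈ P ∧ y ∈ Q) ∨ (y ∈ P ∧ x ∈ Q)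
    · -- joining edge: crosses Prt, does not cross Prt'
      have hA : ¬ ∃ U ∈ Prt, ∀ p ∈ s(x, y), p ∈ U := by
        rintro ⟨U, hU, hall⟩
        obtain ⟨hx, hy⟩ := (hmemiff U).mp hall
        rcases hJ with ⟨h1, h2⟩ | ⟨h1, h2⟩
        · exact hPQ ((uniq hP hU h1 hx).trans (uniq hU hQ hy h2))
        · exact hPQ ((uniq hP hU h1 hy).trans (uniq hU hQ hx h2))
      have hB : ∃ U ∈ Prt', ∀ p ∈ s(x, y), p ∈ U := by
        refine ⟨P ∪ Q, Finset.mem_insert_self _ _, (hmemiff _).mpr ?_⟩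
        rcases hJ with ⟨h1, h2⟩ | ⟨h1, h2⟩
        · exact ⟨Finset.mem_union_left _ h1, Finset.mem_union_right _ h2⟩
        · exact ⟨Finset.mem_union_right _ h2, Finset.mem_union_left _ h1⟩
      rw [if_pos hA, if_neg (not_not_intro hB), if_pos ((hJiff).mpr hJ)]
      ring
    · -- non-joining edge: crosses Prt iff crosses Prt'
      have hiff : (∃ U ∈ Prt, ∀ p ∈ s(x, y), p ∈ U)
          ↔ (∃ U ∈ Prt', ∀ p ∈ s(x, y), p ∈ U) := by
        constructor
        · rintro ⟨U, hU, hall⟩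
          obtain ⟨hx, hy⟩ := (hmemiff U).mp hall
          by_cases hUP : U = P
          · refine ⟨P ∪ Q, Finset.mem_insert_self _ _, (hmemiff _).mpr ?_⟩
            subst hUP
            exact ⟨Finset.mem_union_left _ hx, Finset.mem_union_left _ hy⟩
          by_cases hUQ : U = Q
          · refine ⟨P ∪ Q, Finset.mem_insert_self _ _, (hmemiff _).mpr ?_⟩
            subst hUQ
            exact ⟨Finset.mem_union_right _ hx, Finset.mem_union_right _ hy⟩
          · exact ⟨U, Finset.mem_insert_of_mem (Finset.mem_erase.mpr
              ⟨hUQ, Finset.mem_erase.mpr ⟨hUP, hU⟩⟩), hall⟩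
        · rintro ⟨U, hU, hall⟩
          obtain ⟨hx, hy⟩ := (hmemiff U).mp hall
          rcases Finset.mem_insert.mp hU with rfl | hU'
          · rcases Finset.mem_union.mp hx with hxP | hxQ <;>
              rcases Finset.mem_union.mp hy with hyP | hyQ
            · exact ⟨P, hP, (hmemiff _).mpr ⟨hxP, hyP⟩⟩
            · exact absurd (Or.inl ⟨hxP, hyQ⟩) hJ
            · exact absurd (Or.inr ⟨hyP, hxQ⟩) hJ
            · exact ⟨Q, hQ, (hmemiff _).mpr ⟨hxQ, hyQ⟩⟩
          · exact ⟨U, Finset.mem_of_mem_erase (Finset.mem_of_mem_erase hU'), hall⟩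
      rw [if_neg ((hJiff).not.mpr hJ)]
      by_cases hA : ∃ U ∈ Prt, ∀ p ∈ s(x, y), p ∈ U
      · rw [if_neg (not_not_intro hA), if_neg (not_not_intro (hiff.mp hA))]; ring
      · rw [if_pos hA, if_pos (fun h => hA (hiff.mpr h))]; ring

/-- Merging two distinct blocks `P, Q` of a partition into `P ∪ Q`
changes the energy by exactly the merge gain `Δ(P,Q)`. -/
theorem merge_energy_gain [Fintype C] [DecidableEq C]
    [NormedAddCommGroup E] [InnerProductSpace ℝ E]
    (f : C → E) (ℰ : Finset (Sym2 C)) (hℰ : ∀ e ∈ ℰ, ¬ e.IsDiag)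
    (w : Sym2 C → ℝ) (hw : ∀ e ∈ ℰ, 0 < w e) (lam : ℝ) (hlam : 0 < lam)
    (Prt : Finset (Finset C)) (hPrt : IsPartition Prt)
    (P Q : Finset C) (hP : P ∈ Prt) (hQ : Q ∈ Prt) (hPQ : P ≠ Q) :
    energy f ℰ w lam Prt - energy f ℰ w lam (insert (P ∪ Q) ((Prt.erase P).erase Q))
      = mergeGain f ℰ w lam P Q := by
  classical
  obtain ⟨hne, hdisj, hcov⟩ := hPrt
  have hPne := hne P hP
  have hQne := hne Q hQ
  have hdPQ : Disjoint P Q := hdisj P hP Q hQ hPQ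
  have hnotin : P ∪ Q ∉ (Prt.erase P).erase Q := by
    intro h
    have h1 := Finset.mem_erase.mp h
    have h2 := Finset.mem_erase.mp h1.2
    obtain ⟨p, hp⟩ := hPne
    exact Finset.disjoint_left.mp (hdisj _ h2.2 _ hP h2.1)
      (Finset.mem_union_left _ hp) hp
  have hQ' : Q ∈ Prt.erase P := Finset.mem_erase.mpr ⟨hPQ.symm, hQ⟩
  have hsum1 : ∑ U ∈ Prt, cost f U
      = cost f P + (cost f Q + ∑ U ∈ (Prt.erase P).erase Q, cost f U) := by
    rw [Finset.add_sum_erase _ _ hQ', Finset.add_sum_erase _ _ hP]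
  have hsum2 : ∑ U ∈ insert (P ∪ Q) ((Prt.erase P).erase Q), cost f U
      = cost f (P ∪ Q) + ∑ U ∈ (Prt.erase P).erase Q, cost f U :=
    Finset.sum_insert hnotin
  have hcross := cross_split ℰ w Prt ⟨hne, hdisj, hcov⟩ P Q hP hQ hPQ
  have hcu := cost_union f P Q hPne hQne hdPQ
  rw [energy, energy, mergeGain, hsum1, hsum2, hcross, hcu]
  ring
end

section
/- Let R = P ∪ Q for disjoint finite nonempty subsets P, Q of C. Then |R| · ‖F_R‖² − |P| · ‖F_P‖² − |Q| · ‖F_Q‖² = −(|P|·|Q|/(|P|+|Q|)) · ‖F_P − F_Q‖². -/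
open Finset

variable {C E : Type*}

/-- For `R = P ∪ Q` with `P, Q` disjoint finite nonempty subsets of `C`,
`|R|·‖F_R‖² − |P|·‖F_P‖² − |Q|·‖F_Q‖² = −(|P|·|Q|/(|P|+|Q|))·‖F_P − F_Q‖²`. -/
theorem card_mul_sq_mean_union [DecidableEq C] [NormedAddCommGroup E] [InnerProductSpace ℝ E]
    (f : C → E) (P Q : Finset C) (hP : P.Nonempty) (hQ : Q.Nonempty)
    (hdisj : Disjoint P Q) (R : Finset C) (hR : R = P ∪ Q) :
    ((R.card : ℝ)) * ‖mean f R‖ ^ 2 - (P.card : ℝ) * ‖mean f P‖ ^ 2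
        - (Q.card : ℝ) * ‖mean f Q‖ ^ 2 =
      -((P.card : ℝ) * (Q.card : ℝ) / ((P.card : ℝ) + (Q.card : ℝ))) *
        ‖mean f P - mean f Q‖ ^ 2 := by
  have hp : (0:ℝ) < P.card := by exact_mod_cast (card_pos.mpr hP)
  have hq : (0:ℝ) < Q.card := by exact_mod_cast (card_pos.mpr hQ)
  have hpq : (P.card : ℝ) + Q.card ≠ 0 := by positivity
  have hcardR : (R.card : ℝ) = P.card + Q.card := by
    rw [hR, card_union_of_disjoint hdisj]; push_cast; ring
  set a := mean f P with ha
  set b := mean f Q with hb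
  have hSP : ∑ p ∈ P, f p = (P.card : ℝ) • a := by
    rw [ha, mean, smul_smul, mul_inv_cancel₀ hp.ne', one_smul]
  have hSQ : ∑ p ∈ Q, f p = (Q.card : ℝ) • b := by
    rw [hb, mean, smul_smul, mul_inv_cancel₀ hq.ne', one_smul]
  have hmR : mean f R = ((P.card : ℝ) + Q.card)⁻¹ • ((P.card : ℝ) • a + (Q.card : ℝ) • b) := by
    rw [mean, hcardR, hR, sum_union hdisj, hSP, hSQ]
  rw [hcardR, hmR]
  have expand : ∀ x : E, ‖x‖ ^ 2 = (inner ℝ x x : ℝ) := fun x =>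
    (real_inner_self_eq_norm_sq x).symm
  rw [expand, expand, expand, expand]
  simp only [inner_add_add_self, inner_sub_sub_self, real_inner_smul_left,
    real_inner_smul_right, real_inner_comm a b]
  field_simp
  ring
end

section
/- Let 𝒫 be a partition of C into nonempty blocks, let P, Q be distinct blocks, and let 𝒫' be obtained by replacing P and Q with P ∪ Q. If no edge of ℰ joins P and Q, then Ω(𝒫') > Ω(𝒫) whenever F_P ≠ F_Q, and Ω(𝒫') = Ω(𝒫) whenever F_P = F_Q; in particular, merging two non-adjacent blocks never strictly decreases the energy. -/
open Finset

variable {C E : Type*}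

lemma mysum_norm_sub_sq [NormedAddCommGroup E] [InnerProductSpace ℝ E]
    (f : C → E) (U : Finset C) (hU : U.Nonempty) (c : E) :
    ∑ p ∈ U, ‖f p - c‖ ^ 2 = cost f U + (U.card : ℝ) * ‖mean f U - c‖ ^ 2 := by
  have hcard : (U.card : ℝ) ≠ 0 := by
    exact_mod_cast (Finset.card_pos.mpr hU).ne'
  have hmeansmul : (U.card : ℝ) • mean f U = ∑ p ∈ U, f p := by
    rw [mean, smul_smul, mul_inv_cancel₀ hcard, one_smul]
  have hsum : ∑ p ∈ U, (f p - mean f U) = 0 := by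
    rw [Finset.sum_sub_distrib, Finset.sum_const, ← Nat.cast_smul_eq_nsmul ℝ,
      hmeansmul, sub_self]
  have key : ∀ p : C, ‖f p - c‖ ^ 2
      = ‖f p - mean f U‖ ^ 2
        + 2 * (inner ℝ (f p - mean f U) (mean f U - c) : ℝ)
        + ‖mean f U - c‖ ^ 2 := by
    intro p
    have h := norm_add_sq_real (f p - mean f U) (mean f U - c)
    rw [sub_add_sub_cancel] at h
    linarith
  calc ∑ p ∈ U, ‖f p - c‖ ^ 2
      = ∑ p ∈ U, (‖f p - mean f U‖ ^ 2
          + 2 * (inner ℝ (f p - mean f U) (mean f U - c) : ℝ)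
          + ‖mean f U - c‖ ^ 2) := by
        exact Finset.sum_congr rfl fun p _ => key p
    _ = cost f U + 2 * (inner ℝ (∑ p ∈ U, (f p - mean f U)) (mean f U - c) : ℝ)
          + (U.card : ℝ) * ‖mean f U - c‖ ^ 2 := by
        rw [Finset.sum_add_distrib, Finset.sum_add_distrib, Finset.sum_const,
          nsmul_eq_mul, ← Finset.mul_sum, sum_inner]
        rfl
    _ = cost f U + (U.card : ℝ) * ‖mean f U - c‖ ^ 2 := by
        rw [hsum, inner_zero_left]
        ring

lemma mycost_union [NormedAddCommGroup E] [InnerProductSpace ℝ E] [DecidableEq C]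
    (f : C → E) (P Q : Finset C) (hP : P.Nonempty) (hQ : Q.Nonempty)
    (hd : Disjoint P Q) :
    cost f (P ∪ Q) = cost f P + cost f Q
      + ((P.card : ℝ) * (Q.card : ℝ) / ((P.card : ℝ) + (Q.card : ℝ)))
          * ‖mean f P - mean f Q‖ ^ 2 := by
  set n : ℝ := (P.card : ℝ) with hn
  set m : ℝ := (Q.card : ℝ) with hm
  have hn0 : 0 < n := by rw [hn]; exact_mod_cast Finset.card_pos.mpr hP
  have hm0 : 0 < m := by rw [hm]; exact_mod_cast Finset.card_pos.mpr hQ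
  have hnm : n + m ≠ 0 := by positivity
  have hSP : n • mean f P = ∑ p ∈ P, f p := by
    rw [mean, smul_smul, mul_inv_cancel₀ hn0.ne', one_smul]
  have hSQ : m • mean f Q = ∑ p ∈ Q, f p := by
    rw [mean, smul_smul, mul_inv_cancel₀ hm0.ne', one_smul]
  have hF : mean f (P ∪ Q) = (n + m)⁻¹ • (n • mean f P + m • mean f Q) := by
    rw [mean, Finset.sum_union hd, Finset.card_union_of_disjoint hd, hSP, hSQ,
      Nat.cast_add]
  have hFP : mean f P - mean f (P ∪ Q) = (m / (n + m)) • (mean f P - mean f Q) := by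
    rw [hF]
    match_scalars <;> field_simp <;> ring
  have hFQ : mean f Q - mean f (P ∪ Q) = (n / (n + m)) • (mean f Q - mean f P) := by
    rw [hF]
    match_scalars <;> field_simp <;> ring
  have hsplit : cost f (P ∪ Q)
      = ∑ p ∈ P, ‖f p - mean f (P ∪ Q)‖ ^ 2 + ∑ p ∈ Q, ‖f p - mean f (P ∪ Q)‖ ^ 2 := by
    rw [cost, Finset.sum_union hd]
  rw [hsplit, mysum_norm_sub_sq f P hP, mysum_norm_sub_sq f Q hQ, hFP, hFQ,
    norm_smul, norm_smul, norm_sub_rev (mean f Q)]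
  rw [Real.norm_eq_abs, Real.norm_eq_abs, mul_pow, mul_pow, sq_abs, sq_abs]
  rw [← hn, ← hm]
  field_simp
  ring


/-- If no edge of `ℰ` joins the distinct blocks `P` and `Q`, then merging
them strictly increases the energy when `F_P ≠ F_Q`, and leaves it unchanged when
`F_P = F_Q`; in particular, merging non-adjacent blocks never strictly decreases the
energy. -/
theorem merge_nonadjacent_blocks [Fintype C] [DecidableEq C]
    [NormedAddCommGroup E] [InnerProductSpace ℝ E]
    (f : C → E) (ℰ : Finset (Sym2 C)) (hℰ : ∀ e ∈ ℰ, ¬ e.IsDiag)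
    (w : Sym2 C → ℝ) (hw : ∀ e ∈ ℰ, 0 < w e) (lam : ℝ) (hlam : 0 < lam)
    (Prt : Finset (Finset C)) (hPrt : IsPartition Prt)
    (P Q : Finset C) (hP : P ∈ Prt) (hQ : Q ∈ Prt) (hPQ : P ≠ Q)
    (hnoedge : ∀ e ∈ ℰ, ¬ ∃ p ∈ P, ∃ q ∈ Q, e = s(p, q)) :
    (mean f P ≠ mean f Q →
      energy f ℰ w lam Prt <
        energy f ℰ w lam (insert (P ∪ Q) ((Prt.erase P).erase Q))) ∧
    (mean f P = mean f Q →
      energy f ℰ w lam (insert (P ∪ Q) ((Prt.erase P).erase Q)) =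
        energy f ℰ w lam Prt) := by
  classical
  obtain ⟨hne, hdisj, _⟩ := hPrt
  have hPne : P.Nonempty := hne P hP
  have hQne : Q.Nonempty := hne Q hQ
  have hd : Disjoint P Q := hdisj P hP Q hQ hPQ
  have hQP : Q ∈ Prt.erase P := Finset.mem_erase.mpr ⟨hPQ.symm, hQ⟩
  -- P ∪ Q is not a remaining block
  have hnotmem : P ∪ Q ∉ (Prt.erase P).erase Q := by
    intro hmem
    obtain ⟨hne1, hmem'⟩ := Finset.mem_erase.mp hmem
    obtain ⟨hne2, hmemPrt⟩ := Finset.mem_erase.mp hmem'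
    have hdis : Disjoint (P ∪ Q) P := hdisj _ hmemPrt _ hP hne2
    obtain ⟨p, hp⟩ := hPne
    exact (Finset.disjoint_left.mp hdis (Finset.mem_union_left _ hp)) hp
  -- cross sums agree
  have hcross : crossSum ℰ w (insert (P ∪ Q) ((Prt.erase P).erase Q))
      = crossSum ℰ w Prt := by
    have hiff : ∀ e ∈ ℰ,
        ((∃ U ∈ insert (P ∪ Q) ((Prt.erase P).erase Q), ∀ p ∈ e, p ∈ U)
          ↔ (∃ U ∈ Prt, ∀ p ∈ e, p ∈ U)) := by
      intro e
      induction e using Sym2.ind with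
      | _ a b =>
      intro he
      have hab : a ≠ b := fun h => hℰ _ he (Sym2.mk_isDiag_iff.mpr h)
      simp only [Sym2.mem_iff, forall_eq_or_imp, forall_eq]
      constructor
      · rintro ⟨U, hU, ha, hb⟩
        rcases Finset.mem_insert.mp hU with rfl | hU'
        · rcases Finset.mem_union.mp ha with haP | haQ <;>
            rcases Finset.mem_union.mp hb with hbP | hbQ
          · exact ⟨P, hP, haP, hbP⟩
          · exact absurd ⟨a, haP, b, hbQ, rfl⟩ (hnoedge _ he)
          · exact absurd ⟨b, hbP, a, haQ, Sym2.eq_swap⟩ (hnoedge _ he)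
          · exact ⟨Q, hQ, haQ, hbQ⟩
        · exact ⟨U, (Finset.mem_erase.mp (Finset.mem_erase.mp hU').2).2, ha, hb⟩
      · rintro ⟨U, hU, ha, hb⟩
        by_cases hUP : U = P
        · exact ⟨P ∪ Q, Finset.mem_insert_self _ _,
            Finset.mem_union_left _ (hUP ▸ ha), Finset.mem_union_left _ (hUP ▸ hb)⟩
        by_cases hUQ : U = Q
        · exact ⟨P ∪ Q, Finset.mem_insert_self _ _,
            Finset.mem_union_right _ (hUQ ▸ ha), Finset.mem_union_right _ (hUQ ▸ hb)⟩
        exact ⟨U, Finset.mem_insert_of_mem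
          (Finset.mem_erase.mpr ⟨hUQ, Finset.mem_erase.mpr ⟨hUP, hU⟩⟩), ha, hb⟩
    unfold crossSum
    congr 1
    ext e
    simp only [Finset.mem_filter, and_congr_right_iff]
    intro he
    exact not_congr (hiff e he)
  -- cost sums
  have h1 : ∑ U ∈ Prt, cost f U
      = cost f P + cost f Q + ∑ U ∈ (Prt.erase P).erase Q, cost f U := by
    rw [← Finset.add_sum_erase _ _ hP, ← Finset.add_sum_erase _ _ hQP]
    ring
  have h2 : ∑ U ∈ insert (P ∪ Q) ((Prt.erase P).erase Q), cost f U
      = cost f (P ∪ Q) + ∑ U ∈ (Prt.erase P).erase Q, cost f U :=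
    Finset.sum_insert hnotmem
  have hgap : energy f ℰ w lam (insert (P ∪ Q) ((Prt.erase P).erase Q))
      = energy f ℰ w lam Prt
        + ((P.card : ℝ) * (Q.card : ℝ) / ((P.card : ℝ) + (Q.card : ℝ)))
            * ‖mean f P - mean f Q‖ ^ 2 := by
    unfold energy
    rw [hcross, h1, h2, mycost_union f P Q hPne hQne hd]
    ring
  have hpos : 0 < (P.card : ℝ) * (Q.card : ℝ) / ((P.card : ℝ) + (Q.card : ℝ)) := by
    have hn0 : 0 < (P.card : ℝ) := by exact_mod_cast Finset.card_pos.mpr hPne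
    have hm0 : 0 < (Q.card : ℝ) := by exact_mod_cast Finset.card_pos.mpr hQne
    positivity
  constructor
  · intro hmeans
    rw [hgap]
    have : 0 < ‖mean f P - mean f Q‖ ^ 2 :=
      pow_pos (norm_pos_iff.mpr (sub_ne_zero.mpr hmeans)) 2
    nlinarith
  · intro hmeans
    rw [hgap, hmeans, sub_self, norm_zero]
    ring
end
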